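/- arXiv:0704.1022 — 4 statements merged into one kernel-verified Lean document; each statement's English description precedes it below -/
import Mathlib

section
/- Let (X_n) be a random walk-type process on Z with X_0 = x ≤ k, satisfying: (i) the expected number of visits to any single level ℓ is at most C (i.e. Σ_n P(X_n = ℓ) ≤ C), and (ii) from any state z, the single step satisfies P(X_1 - z ≥ t) ≤ C e^{-s t} for all t ≥ 0. Let γ_k = inf{n ≥ 0 : X_n ≥ k}. Then the overshoot satisfies P(X_{γ_k} ≥ k + b) ≤ C' e^{-s b} for all b ≥ 1, where C' depends only on C and s. -/
open MeasureTheory ProbabilityTheory Filter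

/-- For an integer-level process with (i) a uniform Green-function bound
`∑_n P(X_n = ℓ) ≤ C` at every level, and (ii) an exponential conditional tail for single
steps `P(X_{n+1} - X_n ≥ t | F_n) ≤ C e^{-st}`, the overshoot at the first passage time
`γ_k` over level `k` satisfies `P(X_{γ_k} ≥ k + b) ≤ C' e^{-sb}` for all `b ≥ 1`, with a
constant `C'` depending only on `C` and `s`. -/
theorem overshoot_bound (C s : ℝ) (hC : 0 < C) (hs : 0 < s) :
    ∃ C' : ℝ, 0 < C' ∧
      ∀ (Ω : Type) (m0 : MeasurableSpace Ω) (μ : Measure Ω),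
        IsProbabilityMeasure μ →
        ∀ (𝓕 : Filtration ℕ m0) (X : ℕ → Ω → ℤ) (x k : ℤ), x ≤ k →
          (∀ ω, X 0 ω = x) →
          (∀ n, Measurable[𝓕 n] (X n)) →
          (∀ ℓ : ℤ, ∑' n : ℕ, μ {ω | X n ω = ℓ} ≤ ENNReal.ofReal C) →
          (∀ n : ℕ, ∀ t : ℤ, 0 ≤ t →
            μ[(fun ω => if t ≤ X (n+1) ω - X n ω then (1 : ℝ) else 0) | 𝓕 n]
              ≤ᵐ[μ] fun _ => C * Real.exp (-s * (t : ℝ))) →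
          ∀ b : ℤ, 1 ≤ b →
            μ {ω | k + b ≤ X (sInf {n : ℕ | k ≤ X n ω}) ω}
              ≤ ENNReal.ofReal (C' * Real.exp (-s * (b : ℝ))) := by
  have hr0 : (0:ℝ) < Real.exp (-s) := Real.exp_pos _
  have hr1 : Real.exp (-s) < 1 := by
    rw [Real.exp_lt_one_iff]; linarith
  refine ⟨C ^ 2 * Real.exp (-s) / (1 - Real.exp (-s)),
    div_pos (by positivity) (by linarith), ?_⟩
  intro Ω m0 μ hμ 𝓕 X x k hxk hX0 hmeas hgreen hstep b hb
  have hXm : ∀ n, Measurable (X n) := fun n => (hmeas n).mono (𝓕.le n) le_rfl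
  -- the decomposition sets
  set A : ℕ → ℕ → Set Ω := fun m ℓ =>
    {ω | X m ω = k - ((ℓ : ℤ) + 1)} ∩ {ω | (ℓ : ℤ) + 1 + b ≤ X (m+1) ω - X m ω} with hA
  -- Step A: inclusion
  have hsub : {ω | k + b ≤ X (sInf {n : ℕ | k ≤ X n ω}) ω} ⊆ ⋃ m, ⋃ ℓ, A m ℓ := by
    intro ω hω
    simp only [Set.mem_setOf_eq] at hω
    set S := {n : ℕ | k ≤ X n ω} with hS
    have hne : S.Nonempty := by
      by_contra h
      rw [Set.not_nonempty_iff_eq_empty] at h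
      rw [h, Nat.sInf_empty, hX0 ω] at hω
      omega
    have hmem : sInf S ∈ S := Nat.sInf_mem hne
    have hpos : sInf S ≠ 0 := by
      intro h0
      rw [h0, hX0 ω] at hω
      omega
    obtain ⟨m, hm⟩ : ∃ m, sInf S = m + 1 := ⟨sInf S - 1, by omega⟩
    have hmS : m ∉ S := Nat.notMem_of_lt_sInf (by omega)
    have hmlt : X m ω < k := by
      simp only [hS, Set.mem_setOf_eq, not_le] at hmS
      exact hmS
    set j : ℤ := k - X m ω with hj
    have hj1 : 1 ≤ j := by omega
    refine Set.mem_iUnion.2 ⟨m, Set.mem_iUnion.2 ⟨(j - 1).toNat, ?_, ?_⟩⟩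
    · have hcast : ((j - 1).toNat : ℤ) = j - 1 := Int.toNat_of_nonneg (by omega)
      simp only [Set.mem_setOf_eq]
      omega
    · have hcast : ((j - 1).toNat : ℤ) = j - 1 := Int.toNat_of_nonneg (by omega)
      have hX1 : k + b ≤ X (m + 1) ω := by rw [← hm]; exact hω
      simp only [Set.mem_setOf_eq]
      omega
  -- Step C: key single (m, level) bound
  have key : ∀ (m : ℕ) (z t : ℤ), 0 ≤ t →
      μ ({ω | X m ω = z} ∩ {ω | t ≤ X (m+1) ω - X m ω})
        ≤ ENNReal.ofReal (C * Real.exp (-s * (t : ℝ))) * μ {ω | X m ω = z} := by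
    intro m z t ht
    set Aset : Set Ω := {ω | X m ω = z} with hAset
    set B : Set Ω := {ω | t ≤ X (m+1) ω - X m ω} with hB
    have hBmeas : MeasurableSet B := by
      have hmeasd : Measurable fun ω => X (m+1) ω - X m ω := (hXm (m+1)).sub (hXm m)
      exact hmeasd measurableSet_Ici
    have hAmeas : MeasurableSet[𝓕 m] Aset := (hmeas m) (measurableSet_singleton z)
    have hAmeas0 : MeasurableSet Aset := 𝓕.le m _ hAmeas
    set f : Ω → ℝ := fun ω => if t ≤ X (m+1) ω - X m ω then (1 : ℝ) else 0 with hf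
    have hf_eq : f = B.indicator (fun _ => (1:ℝ)) := by
      ext ω
      by_cases h : t ≤ X (m+1) ω - X m ω
      · simp only [hf]; rw [if_pos h, Set.indicator_of_mem (show ω ∈ B from h)]
      · simp only [hf]; rw [if_neg h, Set.indicator_of_notMem (show ω ∉ B from h)]
    have hfint : Integrable f μ := by
      rw [hf_eq]
      exact (integrable_indicator_iff hBmeas).2
        (integrableOn_const (measure_ne_top μ B))
    have h1 : ∫ ω in Aset, f ω ∂μ = (μ (Aset ∩ B)).toReal := by
      rw [hf_eq, setIntegral_indicator hBmeas, setIntegral_const, smul_eq_mul, mul_one, measureReal_def]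
    have h2 : ∫ ω in Aset, (μ[f | 𝓕 m]) ω ∂μ = ∫ ω in Aset, f ω ∂μ :=
      setIntegral_condExp (𝓕.le m) hfint hAmeas
    have h3 : ∫ ω in Aset, (μ[f | 𝓕 m]) ω ∂μ
        ≤ ∫ _ω in Aset, C * Real.exp (-s * (t : ℝ)) ∂μ := by
      refine setIntegral_mono_ae integrable_condExp.integrableOn
        (integrable_const _).integrableOn ?_
      exact hstep m t ht
    have h4 : ∫ _ω in Aset, C * Real.exp (-s * (t : ℝ)) ∂μ
        = (μ Aset).toReal * (C * Real.exp (-s * (t : ℝ))) := by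
      rw [setIntegral_const, smul_eq_mul, measureReal_def]
    have hmain : (μ (Aset ∩ B)).toReal ≤ C * Real.exp (-s * (t : ℝ)) * (μ Aset).toReal := by
      rw [← h1, ← h2]
      calc ∫ ω in Aset, (μ[f | 𝓕 m]) ω ∂μ ≤ _ := h3
        _ = _ := by rw [h4]; ring
    calc μ (Aset ∩ B) = ENNReal.ofReal ((μ (Aset ∩ B)).toReal) :=
          (ENNReal.ofReal_toReal (measure_ne_top μ _)).symm
      _ ≤ ENNReal.ofReal (C * Real.exp (-s * (t : ℝ)) * (μ Aset).toReal) :=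
          ENNReal.ofReal_le_ofReal hmain
      _ = ENNReal.ofReal (C * Real.exp (-s * (t : ℝ))) * ENNReal.ofReal ((μ Aset).toReal) :=
          ENNReal.ofReal_mul (by positivity)
      _ = ENNReal.ofReal (C * Real.exp (-s * (t : ℝ))) * μ Aset := by
          rw [ENNReal.ofReal_toReal (measure_ne_top μ _)]
  -- real-valued per-ℓ constant
  set c : ℕ → ℝ := fun ℓ => C * Real.exp (-s * ((ℓ : ℝ) + 1 + (b : ℝ))) with hc
  have hc_nonneg : ∀ ℓ, 0 ≤ c ℓ * C := fun ℓ => by positivity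
  -- Step D: for each ℓ, sum over m
  have stepD : ∀ ℓ : ℕ, ∑' m : ℕ, μ (A m ℓ) ≤ ENNReal.ofReal (c ℓ * C) := by
    intro ℓ
    have ht : (0:ℤ) ≤ (ℓ : ℤ) + 1 + b := by omega
    have hcast : (((ℓ : ℤ) + 1 + b : ℤ) : ℝ) = (ℓ : ℝ) + 1 + (b : ℝ) := by push_cast; ring
    calc ∑' m : ℕ, μ (A m ℓ)
        ≤ ∑' m : ℕ, ENNReal.ofReal (c ℓ) * μ {ω | X m ω = k - ((ℓ : ℤ) + 1)} := by
          refine ENNReal.tsum_le_tsum fun m => ?_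
          have := key m (k - ((ℓ : ℤ) + 1)) ((ℓ : ℤ) + 1 + b) ht
          rw [hcast] at this
          exact this
      _ = ENNReal.ofReal (c ℓ) * ∑' m : ℕ, μ {ω | X m ω = k - ((ℓ : ℤ) + 1)} :=
          ENNReal.tsum_mul_left
      _ ≤ ENNReal.ofReal (c ℓ) * ENNReal.ofReal C :=
          mul_le_mul_right (hgreen _) _
      _ = ENNReal.ofReal (c ℓ * C) := (ENNReal.ofReal_mul (by positivity)).symm
  -- summability and value of the real series
  have hsummable : Summable fun ℓ : ℕ => c ℓ * C := by
    have : (fun ℓ : ℕ => c ℓ * C)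
        = fun ℓ : ℕ => (C * Real.exp (-s * (1 + (b:ℝ))) * C) * (Real.exp (-s)) ^ ℓ := by
      funext ℓ
      simp only [hc]
      rw [← Real.exp_nat_mul]
      have harg : -s * ((ℓ:ℝ) + 1 + (b:ℝ)) = -s * (1 + (b:ℝ)) + (ℓ:ℝ) * (-s) := by ring
      rw [harg, Real.exp_add]
      ring
    rw [this]
    exact (summable_geometric_of_lt_one hr0.le hr1).mul_left _
  have hsum_val : ∑' ℓ : ℕ, (c ℓ * C)
      ≤ C ^ 2 * Real.exp (-s) / (1 - Real.exp (-s)) * Real.exp (-s * (b : ℝ)) := by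
    have heq : (fun ℓ : ℕ => c ℓ * C)
        = fun ℓ : ℕ => (C * Real.exp (-s * (1 + (b:ℝ))) * C) * (Real.exp (-s)) ^ ℓ := by
      funext ℓ
      simp only [hc]
      rw [← Real.exp_nat_mul]
      have harg : -s * ((ℓ:ℝ) + 1 + (b:ℝ)) = -s * (1 + (b:ℝ)) + (ℓ:ℝ) * (-s) := by ring
      rw [harg, Real.exp_add]
      ring
    rw [heq, tsum_mul_left, tsum_geometric_of_lt_one hr0.le hr1]
    refine le_of_eq ?_
    have he : Real.exp (-s * (1 + (b:ℝ))) = Real.exp (-s) * Real.exp (-s * (b:ℝ)) := by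
      rw [← Real.exp_add]; ring_nf
    have hden : (1 : ℝ) - Real.exp (-s) ≠ 0 := by linarith
    rw [he]
    field_simp
  -- put everything together
  calc μ {ω | k + b ≤ X (sInf {n : ℕ | k ≤ X n ω}) ω}
      ≤ μ (⋃ m, ⋃ ℓ, A m ℓ) := measure_mono hsub
    _ ≤ ∑' m : ℕ, μ (⋃ ℓ, A m ℓ) := measure_iUnion_le _
    _ ≤ ∑' m : ℕ, ∑' ℓ : ℕ, μ (A m ℓ) := ENNReal.tsum_le_tsum fun m => measure_iUnion_le _
    _ = ∑' ℓ : ℕ, ∑' m : ℕ, μ (A m ℓ) := ENNReal.tsum_comm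
    _ ≤ ∑' ℓ : ℕ, ENNReal.ofReal (c ℓ * C) := ENNReal.tsum_le_tsum stepD
    _ = ENNReal.ofReal (∑' ℓ : ℕ, c ℓ * C) :=
        (ENNReal.ofReal_tsum_of_nonneg hc_nonneg hsummable).symm
    _ ≤ ENNReal.ofReal (C ^ 2 * Real.exp (-s) / (1 - Real.exp (-s)) * Real.exp (-s * (b : ℝ))) :=
        ENNReal.ofReal_le_ofReal hsum_val
end

section
/- Let (ξ_i)_{i≥1} be i.i.d. positive-integer-valued random variables with E[ξ_1^{p+1}] < ∞ for some integer p ≥ 1. Let V_0 = 0, V_m = ξ_1 + ... + ξ_m, and define the forward recurrence time B_n = min{k ≥ 0 : n + k ∈ {V_m : m ≥ 0}}. Then sup_n E[B_n^p] < ∞. -/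
open MeasureTheory ProbabilityTheory Filter
open scoped ENNReal NNReal

namespace ForwardRecAux

variable {Ω : Type*}

/-- Partial sums of the sequence shifted by `t`. -/
noncomputable def V (ξ : ℕ → Ω → ℕ) (t m : ℕ) (ω : Ω) : ℕ := ∑ i ∈ Finset.range m, ξ (t + i) ω

/-- Forward recurrence time at `n` for the sequence shifted by `t`. -/
noncomputable def B (ξ : ℕ → Ω → ℕ) (t n : ℕ) (ω : Ω) : ℕ := sInf {k | ∃ m, V ξ t m ω = n + k}

variable {ξ : ℕ → Ω → ℕ}

lemma V_mono {t : ℕ} {ω : Ω} : Monotone fun m => V ξ t m ω := fun _ _ h =>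
  Finset.sum_le_sum_of_subset (Finset.range_subset_range.2 h)

lemma le_V (hpos : ∀ i ω, 1 ≤ ξ i ω) (t m : ℕ) (ω : Ω) : m ≤ V ξ t m ω := by
  calc m = ∑ _i ∈ Finset.range m, 1 := by simp
  _ ≤ V ξ t m ω := Finset.sum_le_sum fun i _ => hpos _ _

lemma B_zero (t : ℕ) (ω : Ω) : B ξ t 0 ω = 0 :=
  Nat.sInf_eq_zero.2 (Or.inl ⟨0, by simp [V]⟩)

lemma V_succ (t m : ℕ) (ω : Ω) : V ξ t (m+1) ω = ξ t ω + V ξ (t+1) m ω := by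
  have h : (∑ i ∈ Finset.range m, ξ (t + (i+1)) ω) = V ξ (t+1) m ω :=
    Finset.sum_congr rfl fun i _ => by rw [show t + (i+1) = t + 1 + i from by omega]
  rw [V, Finset.sum_range_succ', h, Nat.add_comm]
  rfl

lemma B_set_eq {t n : ℕ} (hn : 1 ≤ n) (ω : Ω) :
    {k | ∃ m, V ξ t m ω = n + k} = {k | ∃ m, ξ t ω + V ξ (t+1) m ω = n + k} := by
  ext k
  constructor
  · rintro ⟨m, hm⟩
    rcases m with _ | m'
    · exfalso; simp [V] at hm; omega
    · exact ⟨m', by rw [← V_succ]; exact hm⟩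
  · rintro ⟨m, hm⟩
    exact ⟨m + 1, by rw [V_succ]; exact hm⟩

lemma B_of_ge {t n : ℕ} {ω : Ω} (hn : 1 ≤ n) (hc : n ≤ ξ t ω) :
    B ξ t n ω = ξ t ω - n := by
  rw [B, B_set_eq hn]
  apply le_antisymm
  · exact Nat.sInf_le ⟨0, by simp [V]; omega⟩
  · have hne : {k | ∃ m, ξ t ω + V ξ (t+1) m ω = n + k}.Nonempty :=
      ⟨ξ t ω - n, 0, by simp [V]; omega⟩
    obtain ⟨m, hm⟩ := Nat.sInf_mem hne
    omega

lemma B_shift {t n : ℕ} {ω : Ω} (hn : 1 ≤ n) (hc : ξ t ω ≤ n) :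
    B ξ t n ω = B ξ (t+1) (n - ξ t ω) ω := by
  rw [B, B_set_eq hn, B]
  congr 1
  ext k
  simp only [Set.mem_setOf_eq]
  constructor
  · rintro ⟨m, hm⟩; exact ⟨m, by omega⟩
  · rintro ⟨m, hm⟩; exact ⟨m, by omega⟩

lemma B_eq_bdd (hpos : ∀ i ω, 1 ≤ ξ i ω) (t n : ℕ) (ω : Ω) :
    B ξ t n ω = sInf {k | ∃ m ≤ n, V ξ t m ω = n + k} := by
  have hne : {k | ∃ m, V ξ t m ω = n + k}.Nonempty :=
    ⟨V ξ t n ω - n, n, by have := le_V hpos t n ω; omega⟩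
  obtain ⟨m, hm⟩ := Nat.sInf_mem hne
  have hex : ∃ m, V ξ t m ω = n + B ξ t n ω := ⟨m, hm⟩
  have hm₀ : V ξ t (Nat.find hex) ω = n + B ξ t n ω := Nat.find_spec hex
  set m₀ := Nat.find hex with hm₀def
  have hm₀le : m₀ ≤ n := by
    by_contra hgt
    push_neg at hgt
    have h0 : 0 < m₀ := by omega
    have hlt : V ξ t (m₀ - 1) ω < n + B ξ t n ω := by
      have hne' := Nat.find_min hex (m := m₀ - 1) (by omega)
      have hle : V ξ t (m₀ - 1) ω ≤ V ξ t m₀ ω := V_mono (by omega)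
      omega
    have hVlt : V ξ t (m₀ - 1) ω < n := by
      by_contra hge
      push_neg at hge
      have : B ξ t n ω ≤ V ξ t (m₀ - 1) ω - n := Nat.sInf_le ⟨m₀ - 1, by omega⟩
      omega
    have := le_V hpos t (m₀ - 1) ω
    omega
  have hmem : B ξ t n ω ∈ {k | ∃ m ≤ n, V ξ t m ω = n + k} := ⟨m₀, hm₀le, hm₀⟩
  apply le_antisymm
  · obtain ⟨m', _, hm'⟩ := Nat.sInf_mem ⟨_, hmem⟩
    exact Nat.sInf_le ⟨m', hm'⟩
  · exact Nat.sInf_le hmem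

/-- `B` as a function of the window `ξ t, …, ξ (t+n-1)`. -/
noncomputable def gfun (n : ℕ) (v : Fin n → ℕ) : ℕ :=
  sInf {k | ∃ m ≤ n, (∑ i ∈ Finset.range m, if h : i < n then v ⟨i, h⟩ else 0) = n + k}

lemma B_eq_gfun (hpos : ∀ i ω, 1 ≤ ξ i ω) (t n : ℕ) (ω : Ω) :
    B ξ t n ω = gfun n (fun i => ξ (t + i) ω) := by
  rw [B_eq_bdd hpos, gfun]
  congr 1
  ext k
  simp only [Set.mem_setOf_eq]
  constructor
  · rintro ⟨m, hmn, hV⟩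
    refine ⟨m, hmn, ?_⟩
    rw [← hV, V]
    exact (Finset.sum_congr rfl fun i hi => by
      rw [dif_pos (lt_of_lt_of_le (Finset.mem_range.1 hi) hmn)]).symm
  · rintro ⟨m, hmn, hV⟩
    refine ⟨m, hmn, ?_⟩
    rw [← hV, V]
    exact Finset.sum_congr rfl fun i hi => by
      rw [dif_pos (lt_of_lt_of_le (Finset.mem_range.1 hi) hmn)]

section Meas

variable {m0 : MeasurableSpace Ω}

lemma measurable_B (hmeas : ∀ i, Measurable (ξ i)) (hpos : ∀ i ω, 1 ≤ ξ i ω) (t n : ℕ) :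
    Measurable fun ω => B ξ t n ω := by
  have h : (fun ω => B ξ t n ω) = (fun v : Fin n → ℕ => gfun n v) ∘ fun ω i => ξ (t + i) ω :=
    funext fun ω => B_eq_gfun hpos t n ω
  rw [h]
  exact (measurable_of_countable _).comp (measurable_pi_lambda _ fun i => hmeas _)

lemma indep_aux {μ : Measure Ω} (hmeas : ∀ i, Measurable (ξ i)) (hpos : ∀ i ω, 1 ≤ ξ i ω)
    (hindep : iIndepFun ξ μ)
    (t j : ℕ) (φ ψ : ℕ → ℝ≥0∞) :
    IndepFun (fun ω => φ (ξ t ω)) (fun ω => ψ (B ξ (t+1) j ω)) μ := by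
  classical
  have base := hindep.indepFun_finset {t} (Finset.Ico (t+1) (t+1+j))
    (by simp [Finset.disjoint_left]) hmeas
  have comp := base.comp
    (φ := fun v : ↥({t} : Finset ℕ) → ℕ => φ (v ⟨t, Finset.mem_singleton_self t⟩))
    (ψ := fun v : ↥(Finset.Ico (t+1) (t+1+j)) → ℕ =>
      ψ (gfun j fun i : Fin j => v ⟨t+1+i.val, by simp only [Finset.mem_Ico]; omega⟩))
    (measurable_of_countable _) (measurable_of_countable _)
  have h2 : (fun v : ↥(Finset.Ico (t+1) (t+1+j)) → ℕ =>
      ψ (gfun j fun i : Fin j => v ⟨t+1+i.val, by simp only [Finset.mem_Ico]; omega⟩)) ∘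
      (fun a (i : (Finset.Ico (t+1) (t+1+j) : Finset ℕ)) => ξ i a)
      = fun ω => ψ (B ξ (t+1) j ω) := by
    funext a
    simp only [Function.comp]
    rw [B_eq_gfun hpos]
  rw [h2] at comp
  exact comp

lemma lintegral_partition {μ : Measure Ω} (X : Ω → ℕ) (hX : Measurable X) (F : Ω → ℝ≥0∞) :
    ∫⁻ ω, F ω ∂μ = ∑' c : ℕ, ∫⁻ ω in {ω | X ω = c}, F ω ∂μ := by
  have hs : ∀ c, MeasurableSet {ω | X ω = c} := fun c => hX (measurableSet_singleton c)
  have hd : Pairwise (Function.onFun Disjoint fun c => {ω | X ω = c}) := by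
    intro c c' hne
    rw [Function.onFun, Set.disjoint_left]
    rintro ω (h1 : X ω = c) (h2 : X ω = c')
    exact hne (h1 ▸ h2 ▸ rfl)
  have hU : (⋃ c, {ω | X ω = c}) = Set.univ := by ext ω; simp
  rw [← setLIntegral_univ, ← hU, lintegral_iUnion hs hd]

end Meas

section Main

variable {m0 : MeasurableSpace Ω} {μ : Measure Ω}

lemma main_bound [IsProbabilityMeasure μ]
    (hmeas : ∀ i, Measurable (ξ i)) (hpos : ∀ i ω, 1 ≤ ξ i ω)
    (hindep : iIndepFun ξ μ)
    (hident : ∀ i, μ.map (ξ i) = μ.map (ξ 0)) (p : ℕ) (hp : 1 ≤ p) :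
    ∀ n t, ∫⁻ ω, ((B ξ t n ω : ℝ≥0∞))^p ∂μ ≤
      ∑ k ∈ Finset.range n, ∫⁻ ω, (((ξ 0 ω - (k+1) : ℕ) : ℝ≥0∞))^p ∂μ := by
  intro n
  induction n using Nat.strong_induction_on with
  | _ n IH =>
    intro t
    rcases Nat.eq_zero_or_pos n with rfl | hn
    · simp [B_zero, zero_pow (by omega : p ≠ 0)]
    set Z : ℕ → ℝ≥0∞ := fun k => ∫⁻ ω, (((ξ 0 ω - k : ℕ) : ℝ≥0∞))^p ∂μ with hZ
    set S : ℝ≥0∞ := ∑ k ∈ Finset.range (n-1), Z (k+1) with hSdef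
    have hZt : ∀ (t' k : ℕ), ∫⁻ ω, (((ξ t' ω - k : ℕ) : ℝ≥0∞))^p ∂μ = Z k := by
      intro t' k
      have hφ : Measurable fun c : ℕ => (((c - k : ℕ) : ℝ≥0∞))^p := measurable_from_nat
      calc ∫⁻ ω, (((ξ t' ω - k : ℕ) : ℝ≥0∞))^p ∂μ
          = ∫⁻ c, (((c - k : ℕ) : ℝ≥0∞))^p ∂(μ.map (ξ t')) := (lintegral_map hφ (hmeas t')).symm
        _ = ∫⁻ c, (((c - k : ℕ) : ℝ≥0∞))^p ∂(μ.map (ξ 0)) := by rw [hident t']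
        _ = Z k := lintegral_map hφ (hmeas 0)
    set E : ℕ → Set Ω := fun c => {ω | ξ t ω = c} with hE
    have hEm : ∀ c, MeasurableSet (E c) := fun c => (hmeas t) (measurableSet_singleton c)
    have hterm : ∀ c, ∫⁻ ω in E c, ((B ξ t n ω : ℝ≥0∞))^p ∂μ ≤
        (((c - n : ℕ) : ℝ≥0∞))^p * μ (E c) + μ (E c) * S := by
      intro c
      rcases lt_or_ge c n with hcn | hcn
      · rcases Nat.eq_zero_or_pos c with rfl | hc
        · have hE0 : E 0 = ∅ := by
            ext ω
            simp only [hE, Set.mem_setOf_eq, Set.mem_empty_iff_false, iff_false]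
            have := hpos t ω; omega
          simp [hE0]
        · have hBeq : ∀ ω ∈ E c, ((B ξ t n ω : ℝ≥0∞))^p = ((B ξ (t+1) (n - c) ω : ℝ≥0∞))^p := by
            intro ω hω
            have hc' : ξ t ω = c := hω
            rw [B_shift hn (by omega), hc']
          rw [setLIntegral_congr_fun (hEm c) hBeq]
          have hindepc := indep_aux hmeas hpos hindep t (n - c)
            (fun x => if x = c then (1:ℝ≥0∞) else 0) (fun b => ((b : ℝ≥0∞))^p)
          have hres : ∫⁻ ω in E c, ((B ξ (t+1) (n-c) ω : ℝ≥0∞))^p ∂μ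
              = μ (E c) * ∫⁻ ω, ((B ξ (t+1) (n-c) ω : ℝ≥0∞))^p ∂μ := by
            rw [← lintegral_indicator (hEm c)]
            have hfe : (E c).indicator (fun ω => ((B ξ (t+1) (n-c) ω : ℝ≥0∞))^p)
                = (fun ω => if ξ t ω = c then (1:ℝ≥0∞) else 0) *
                  (fun ω => ((B ξ (t+1) (n-c) ω : ℝ≥0∞))^p) := by
              funext ω
              by_cases h : ξ t ω = c <;> simp [Set.indicator, hE, h]
            have hm1 : Measurable fun ω => if ξ t ω = c then (1:ℝ≥0∞) else 0 :=
              (measurable_from_nat (f := fun x : ℕ => if x = c then (1:ℝ≥0∞) else 0)).comp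
                (hmeas t)
            have hm2 : Measurable fun ω => ((B ξ (t+1) (n-c) ω : ℝ≥0∞))^p :=
              (measurable_from_nat (f := fun b : ℕ => ((b : ℝ≥0∞))^p)).comp
                (measurable_B hmeas hpos (t+1) (n-c))
            rw [hfe, lintegral_mul_eq_lintegral_mul_lintegral_of_indepFun hm1 hm2 hindepc]
            congr 1
            have hind : (fun ω => if ξ t ω = c then (1:ℝ≥0∞) else 0) = (E c).indicator 1 := by
              funext ω
              by_cases h : ξ t ω = c <;> simp [Set.indicator, hE, h]
            rw [hind, lintegral_indicator_one (hEm c)]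
          rw [hres]
          have hIH : ∫⁻ ω, ((B ξ (t+1) (n-c) ω : ℝ≥0∞))^p ∂μ ≤ S := by
            refine (IH (n-c) (by omega) (t+1)).trans ?_
            rw [hSdef]
            refine Finset.sum_le_sum_of_subset (Finset.range_subset_range.2 (by omega))
          calc μ (E c) * ∫⁻ ω, ((B ξ (t+1) (n-c) ω : ℝ≥0∞))^p ∂μ
              ≤ μ (E c) * S := mul_le_mul_right hIH _
            _ ≤ (((c - n : ℕ) : ℝ≥0∞))^p * μ (E c) + μ (E c) * S := le_add_self
      · have hBeq : ∀ ω ∈ E c, ((B ξ t n ω : ℝ≥0∞))^p = (((c - n : ℕ) : ℝ≥0∞))^p := by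
          intro ω hω
          have hc' : ξ t ω = c := hω
          rw [B_of_ge hn (by omega), hc']
        rw [setLIntegral_congr_fun (hEm c) hBeq, setLIntegral_const]
        exact le_self_add
    have hdecomp := lintegral_partition (μ := μ) (ξ t) (hmeas t)
      (fun ω => ((B ξ t n ω : ℝ≥0∞))^p)
    have h2 : ∑' c : ℕ, ((((c - n : ℕ) : ℝ≥0∞))^p * μ (E c)) = Z n := by
      rw [← hZt t n, lintegral_partition (μ := μ) (ξ t) (hmeas t)
        (fun ω => (((ξ t ω - n : ℕ) : ℝ≥0∞))^p)]
      congr 1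
      funext c
      rw [setLIntegral_congr_fun (hEm c)
        (fun ω (hω : ξ t ω = c) => by rw [hω]), setLIntegral_const]
    have h3 : ∑' c : ℕ, μ (E c) * S = S := by
      rw [ENNReal.tsum_mul_right]
      have hone : ∑' c : ℕ, μ (E c) = 1 := by
        have hd : Pairwise (Function.onFun Disjoint E) := by
          intro c c' hne
          rw [Function.onFun, Set.disjoint_left]
          rintro ω (h1 : ξ t ω = c) (h2 : ξ t ω = c')
          exact hne (h1 ▸ h2 ▸ rfl)
        rw [← measure_iUnion hd hEm]
        have hU : (⋃ c, E c) = Set.univ := by ext ω; simp [hE]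
        rw [hU, measure_univ]
      rw [hone, one_mul]
    have hfin : ∑ k ∈ Finset.range n, Z (k+1) = Z n + S := by
      obtain ⟨n', rfl⟩ : ∃ n', n = n' + 1 := ⟨n - 1, by omega⟩
      rw [Finset.sum_range_succ, hSdef]
      simp [add_comm]
    calc ∫⁻ ω, ((B ξ t n ω : ℝ≥0∞))^p ∂μ
        = ∑' c : ℕ, ∫⁻ ω in E c, ((B ξ t n ω : ℝ≥0∞))^p ∂μ := hdecomp
      _ ≤ ∑' c : ℕ, ((((c - n : ℕ) : ℝ≥0∞))^p * μ (E c) + μ (E c) * S) :=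
          ENNReal.tsum_le_tsum hterm
      _ = Z n + S := by rw [ENNReal.tsum_add, h2, h3]
      _ = ∑ k ∈ Finset.range n, Z (k+1) := hfin.symm

lemma tail_bound (hmeas0 : Measurable (ξ 0)) (p : ℕ) (hp : 1 ≤ p) :
    ∑' k : ℕ, ∫⁻ ω, (((ξ 0 ω - (k+1) : ℕ) : ℝ≥0∞))^p ∂μ
      ≤ ∫⁻ ω, ((ξ 0 ω : ℝ≥0∞))^(p+1) ∂μ := by
  have hmf : ∀ k : ℕ, AEMeasurable (fun ω => (((ξ 0 ω - (k+1) : ℕ) : ℝ≥0∞))^p) μ := fun k =>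
    ((measurable_from_nat (f := fun c : ℕ => (((c - (k+1) : ℕ) : ℝ≥0∞))^p)).comp
      hmeas0).aemeasurable
  rw [← lintegral_tsum hmf]
  apply lintegral_mono
  intro ω
  show (∑' k : ℕ, (((ξ 0 ω - (k+1) : ℕ) : ℝ≥0∞))^p) ≤ ((ξ 0 ω : ℝ≥0∞))^(p+1)
  set c := ξ 0 ω with hc
  have hzero : ∀ k ∉ Finset.range c, (((c - (k+1) : ℕ) : ℝ≥0∞))^p = 0 := by
    intro k hk
    simp only [Finset.mem_range, not_lt] at hk
    rw [show c - (k+1) = 0 from by omega]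
    simp [zero_pow (by omega : p ≠ 0)]
  rw [tsum_eq_sum hzero]
  calc ∑ k ∈ Finset.range c, (((c - (k+1) : ℕ) : ℝ≥0∞))^p
      ≤ ∑ _k ∈ Finset.range c, ((c : ℝ≥0∞))^p := by
        refine Finset.sum_le_sum fun k _ => ?_
        gcongr
        exact_mod_cast Nat.sub_le _ _
    _ = (c : ℝ≥0∞)^(p+1) := by
        rw [Finset.sum_const, Finset.card_range, nsmul_eq_mul, pow_succ, mul_comm]

lemma T_lt_top (hmom : Integrable (fun ω => ((ξ 0 ω : ℝ)) ^ (p + 1)) μ) :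
    ∫⁻ ω, ((ξ 0 ω : ℝ≥0∞))^(p+1) ∂μ < ⊤ := by
  have h := hmom.hasFiniteIntegral
  have heq : ∫⁻ ω, ((ξ 0 ω : ℝ≥0∞))^(p+1) ∂μ
      = ∫⁻ ω, (‖((ξ 0 ω : ℝ))^(p+1)‖₊ : ℝ≥0∞) ∂μ := by
    apply lintegral_congr
    intro ω
    rw [← enorm_eq_nnnorm, Real.enorm_eq_ofReal (by positivity), ENNReal.ofReal_pow (by positivity),
      ENNReal.ofReal_natCast]
  rw [heq]
  exact h

end Main

end ForwardRecAux

/-- For i.i.d. positive-integer random variables with finite `(p+1)`-st moment,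
the forward recurrence time `B_n` of the associated renewal process has `p`-th moments
bounded uniformly in `n`. -/
theorem forward_recurrence_time_moment_bound
    {Ω : Type*} {m0 : MeasurableSpace Ω} {μ : Measure Ω} [IsProbabilityMeasure μ]
    (ξ : ℕ → Ω → ℕ) (hmeas : ∀ i, Measurable (ξ i))
    (hpos : ∀ i ω, 1 ≤ ξ i ω)
    (hindep : iIndepFun ξ μ)
    (hident : ∀ i, μ.map (ξ i) = μ.map (ξ 0))
    (p : ℕ) (hp : 1 ≤ p)
    (hmom : Integrable (fun ω => ((ξ 0 ω : ℝ)) ^ (p + 1)) μ) :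
    ∃ K : ℝ, ∀ n : ℕ,
      ∫ ω, ((sInf {k : ℕ | ∃ m : ℕ, (∑ i ∈ Finset.range m, ξ i ω) = n + k} : ℕ) : ℝ) ^ p ∂μ
        ≤ K := by
  classical
  refine ⟨(∫⁻ ω, ((ξ 0 ω : ℝ≥0∞))^(p+1) ∂μ).toReal, fun n => ?_⟩
  have hsets : ∀ ω : Ω, {k : ℕ | ∃ m : ℕ, (∑ i ∈ Finset.range m, ξ i ω) = n + k}
      = {k | ∃ m, ForwardRecAux.V ξ 0 m ω = n + k} := by
    intro ω; ext k; simp [ForwardRecAux.V]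
  have hInt : (fun ω => ((sInf {k : ℕ | ∃ m : ℕ, (∑ i ∈ Finset.range m, ξ i ω) = n + k} : ℕ) : ℝ)^p)
      = fun ω => ((ForwardRecAux.B ξ 0 n ω : ℕ) : ℝ)^p := by
    funext ω; rw [show ((sInf {k : ℕ | ∃ m : ℕ, (∑ i ∈ Finset.range m, ξ i ω) = n + k} : ℕ) : ℝ)
      = ((ForwardRecAux.B ξ 0 n ω : ℕ) : ℝ) from by rw [ForwardRecAux.B, ← hsets ω]]
  rw [hInt]
  have hmB := ForwardRecAux.measurable_B (ξ := ξ) hmeas hpos 0 n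
  have hsm : AEStronglyMeasurable (fun ω => ((ForwardRecAux.B ξ 0 n ω : ℕ) : ℝ)^p) μ :=
    (((measurable_from_nat (f := fun k : ℕ => ((k : ℝ))^p)).comp hmB)).aestronglyMeasurable
  rw [integral_eq_lintegral_of_nonneg_ae (ae_of_all _ fun ω => by positivity) hsm]
  have hof : ∀ ω : Ω, ENNReal.ofReal (((ForwardRecAux.B ξ 0 n ω : ℕ) : ℝ)^p)
      = ((ForwardRecAux.B ξ 0 n ω : ℕ) : ℝ≥0∞)^p := fun ω => by
    rw [ENNReal.ofReal_pow (by positivity), ENNReal.ofReal_natCast]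
  simp only [hof]
  apply ENNReal.toReal_mono (ForwardRecAux.T_lt_top hmom).ne
  refine (ForwardRecAux.main_bound hmeas hpos hindep hident p hp n 0).trans ?_
  exact le_trans (ENNReal.sum_le_tsum _) (ForwardRecAux.tail_bound (hmeas 0) p hp)
end

section
/- Let (η_j)_{j≥1} be i.i.d. random variables with 1 ≤ η_j ≤ c_2 n^γ almost surely, for constants c_2 ≤ 1, γ ∈ (0,1], and suppose P(η_1 ≥ a) ≥ c_1 a^{-1/2} for all 1 ≤ a ≤ c_2 n^γ. Let S_k = η_1 + ... + η_k and K(n) = inf{k : S_k > n}. Then E[K(n)] ≤ C n^{1-γ/2} for a constant C depending only on c_1, c_2, γ. -/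
open MeasureTheory ProbabilityTheory Filter

/-- For i.i.d. increments `η_j` with `1 ≤ η_j ≤ c₂ n^γ` and tail
`P(η ≥ a) ≥ c₁ a^{-1/2}` on `[1, c₂ n^γ]`, the renewal count
`K(n) = inf{k : S_k > n}` satisfies `E[K(n)] ≤ C n^{1-γ/2}` with `C = C(c₁,c₂,γ)`. -/
theorem renewal_count_bound (c₁ c₂ γ : ℝ)
    (hc₁ : 0 < c₁) (hc₂ : 0 < c₂) (hc₂' : c₂ ≤ 1) (hγ : 0 < γ) (hγ' : γ ≤ 1) :
    ∃ C : ℝ, 0 < C ∧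
      ∀ (n : ℕ), 0 < n →
      ∀ (Ω : Type) (m0 : MeasurableSpace Ω) (μ : Measure Ω),
        IsProbabilityMeasure μ →
        ∀ (η : ℕ → Ω → ℝ),
          (∀ i, Measurable (η i)) →
          iIndepFun η μ →
          (∀ i, μ.map (η i) = μ.map (η 0)) →
          (∀ i, ∀ᵐ ω ∂μ, 1 ≤ η i ω ∧ η i ω ≤ c₂ * (n : ℝ) ^ γ) →
          (∀ a : ℝ, 1 ≤ a → a ≤ c₂ * (n : ℝ) ^ γ →
            ENNReal.ofReal (c₁ * a ^ (-(1:ℝ)/2)) ≤ μ {ω | a ≤ η 0 ω}) →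
          ∫ ω, ((sInf {k : ℕ | (n : ℝ) < ∑ i ∈ Finset.range k, η i ω} : ℕ) : ℝ) ∂μ
            ≤ C * (n : ℝ) ^ (1 - γ/2) := by
  set d : ℝ := c₁ * c₂ ^ ((1:ℝ)/2) with hd
  have hd0 : 0 < d := mul_pos hc₁ (Real.rpow_pos_of_pos hc₂ _)
  refine ⟨2 / d, by positivity, ?_⟩
  intro n hn Ω m0 μ hμ η hmeas hindep hident hbdd htail
  set M : ℝ := c₂ * (n : ℝ) ^ γ with hM
  have hn1 : (1:ℝ) ≤ (n:ℝ) := by exact_mod_cast hn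
  have hnpos : (0:ℝ) < (n:ℝ) := by positivity
  -- M ≤ n
  have hMn : M ≤ (n:ℝ) := by
    have h1 : (n:ℝ) ^ γ ≤ (n:ℝ) ^ (1:ℝ) := Real.rpow_le_rpow_of_exponent_le hn1 hγ'
    rw [Real.rpow_one] at h1
    calc M ≤ 1 * (n:ℝ) ^ γ := by
            apply mul_le_mul_of_nonneg_right hc₂' (Real.rpow_nonneg hnpos.le _)
      _ = (n:ℝ) ^ γ := one_mul _
      _ ≤ (n:ℝ) := h1
  have hMpos : 0 < M := by positivity
  -- S and K
  set S : ℕ → Ω → ℝ := fun k ω => ∑ i ∈ Finset.range k, η i ω with hS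
  set K : Ω → ℕ := fun ω => sInf {k : ℕ | (n : ℝ) < S k ω} with hK
  -- good set
  have hG : ∀ᵐ ω ∂μ, ∀ i, 1 ≤ η i ω ∧ η i ω ≤ M := ae_all_iff.mpr hbdd
  -- M ≥ 1
  have hM1 : (1:ℝ) ≤ M := by
    obtain ⟨ω, hω⟩ := (hG.and (ae_of_all μ (fun _ => trivial))).exists
    exact le_trans (hω.1 0).1 (hω.1 0).2
  -- events
  set B : ℕ → Set Ω := fun i => {ω | S i ω ≤ (n:ℝ)} with hB
  have hSmeas : ∀ i, Measurable (S i) := fun i => Finset.measurable_sum _ (fun j _ => hmeas j)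
  have hBmeas : ∀ i, MeasurableSet (B i) := fun i => measurableSet_le (hSmeas i) measurable_const
  set F : ℕ → Ω → ℝ := fun i => (B i).indicator (fun _ => (1:ℝ)) with hF
  -- pointwise facts on good set
  have key : ∀ ω, (∀ i, 1 ≤ η i ω ∧ η i ω ≤ M) →
      ((K ω : ℝ) = ∑ i ∈ Finset.range (n+1), F i ω ∧
        ∑ i ∈ Finset.range (n+1), F i ω * η i ω ≤ 2 * (n:ℝ)) := by
    intro ω hω
    have hmono : ∀ k l, k ≤ l → S k ω ≤ S l ω := by
      intro k l hkl
      apply Finset.sum_le_sum_of_subset_of_nonneg (Finset.range_subset_range.mpr hkl)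
      intro i _ _; linarith [(hω i).1]
    have hlow : ∀ k : ℕ, (k : ℝ) ≤ S k ω := by
      intro k
      calc (k:ℝ) = ∑ i ∈ Finset.range k, (1:ℝ) := by simp
        _ ≤ S k ω := Finset.sum_le_sum (fun i _ => (hω i).1)
    have hne : (n+1) ∈ {k : ℕ | (n : ℝ) < S k ω} := by
      have := hlow (n+1)
      simp only [Set.mem_setOf_eq]
      push_cast at this ⊢
      linarith
    have hKle : K ω ≤ n + 1 := Nat.sInf_le hne
    have hKmem : (n:ℝ) < S (K ω) ω := Nat.sInf_mem (Set.nonempty_of_mem hne)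
    have hiff : ∀ i, i < K ω ↔ S i ω ≤ (n:ℝ) := by
      intro i
      constructor
      · intro hi
        have := Nat.notMem_of_lt_sInf hi
        simpa [Set.mem_setOf_eq, not_lt] using this
      · intro hi
        by_contra h
        push_neg at h
        have h2 : S (K ω) ω ≤ S i ω := hmono _ _ h
        linarith
    have hfilter : (Finset.range (n+1)).filter (fun i => i < K ω) = Finset.range (K ω) := by
      ext i; simp only [Finset.mem_filter, Finset.mem_range]; omega
    have hFeq : ∀ i, F i ω = if i < K ω then (1:ℝ) else 0 := by
      intro i
      simp only [hF, Set.indicator, hB, Set.mem_setOf_eq, hiff i]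
    constructor
    · rw [Finset.sum_congr rfl (fun i _ => hFeq i)]
      rw [← Finset.sum_filter, hfilter]
      simp
    · have hsum : ∑ i ∈ Finset.range (n+1), F i ω * η i ω
          = ∑ i ∈ Finset.range (K ω), η i ω := by
        have : ∀ i, F i ω * η i ω = if i < K ω then η i ω else 0 := by
          intro i; rw [hFeq i]; split <;> simp
        rw [Finset.sum_congr rfl (fun i _ => this i), ← Finset.sum_filter, hfilter]
      rw [hsum]
      rcases Nat.eq_zero_or_pos (K ω) with h0 | hpos
      · rw [h0]; simp only [Finset.range_zero, Finset.sum_empty]; positivity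
      · obtain ⟨m, hm⟩ : ∃ m, K ω = m + 1 := ⟨K ω - 1, by omega⟩
        have hmlt : ¬ ((n:ℝ) < S m ω) := by
          have := Nat.notMem_of_lt_sInf (show m < K ω by omega)
          simpa [Set.mem_setOf_eq] using this
        push_neg at hmlt
        have : ∑ i ∈ Finset.range (K ω), η i ω = S m ω + η m ω := by
          rw [hm]; exact Finset.sum_range_succ _ _
        rw [this]
        have := (hω m).2
        linarith [hMn]
  -- integrability
  have hηint : ∀ i, Integrable (η i) μ := by
    intro i
    refine (integrable_const M).mono' (hmeas i).aestronglyMeasurable ?_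
    filter_upwards [hbdd i] with ω hω
    rw [Real.norm_eq_abs, abs_le]
    exact ⟨by linarith [hω.1], hω.2⟩
  have hFmeas : ∀ i, Measurable (F i) := fun i =>
    measurable_const.indicator (hBmeas i)
  have hFint : ∀ i, Integrable (F i) μ := fun i =>
    (integrable_const (1:ℝ)).indicator (hBmeas i)
  have hFle : ∀ i ω, F i ω = 0 ∨ F i ω = 1 := by
    intro i ω
    by_cases h : ω ∈ B i
    · right; simp [hF, Set.indicator_of_mem h]
    · left; simp [hF, Set.indicator_of_notMem h]
  have hFηint : ∀ i, Integrable (fun ω => F i ω * η i ω) μ := by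
    intro i
    refine (integrable_const M).mono' ((hFmeas i).mul (hmeas i)).aestronglyMeasurable ?_
    filter_upwards [hbdd i] with ω hω
    rw [Real.norm_eq_abs, abs_mul]
    rcases hFle i ω with h | h <;> rw [h]
    · simpa using hMpos.le
    · rw [abs_one, one_mul, abs_le]; exact ⟨by linarith [hω.1], hω.2⟩
  have hFval : ∀ i, ∫ ω, F i ω ∂μ = (μ (B i)).toReal := by
    intro i
    rw [hF]
    rw [integral_indicator_const (1:ℝ) (hBmeas i)]
    simp
    rfl
  -- independence
  have hindepi : ∀ i, IndepFun (F i) (η i) μ := by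
    intro i
    have h1 : IndepFun (∑ j ∈ Finset.range i, η j) (η i) μ :=
      hindep.indepFun_sum_range_succ hmeas i
    have h2 := h1.comp
      (measurable_const.indicator measurableSet_Iic :
        Measurable ((Set.Iic (n:ℝ)).indicator (fun _ => (1:ℝ)))) measurable_id
    have h3 : ((Set.Iic (n:ℝ)).indicator (fun _ => (1:ℝ))) ∘ (∑ j ∈ Finset.range i, η j)
        = F i := by
      funext ω
      simp only [Function.comp_apply, hF, Set.indicator, Finset.sum_apply,
        Set.mem_Iic, hB, Set.mem_setOf_eq, hS]
    rwa [h3] at h2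
  -- identical distribution of integrals
  have hident' : ∀ i, ∫ ω, η i ω ∂μ = ∫ ω, η 0 ω ∂μ := by
    intro i
    have e1 : ∫ ω, η i ω ∂μ = ∫ x, x ∂(μ.map (η i)) :=
      (integral_map (hmeas i).aemeasurable aestronglyMeasurable_id).symm
    have e2 : ∫ ω, η 0 ω ∂μ = ∫ x, x ∂(μ.map (η 0)) :=
      (integral_map (hmeas 0).aemeasurable aestronglyMeasurable_id).symm
    rw [e1, e2, hident i]
  set Eη : ℝ := ∫ ω, η 0 ω ∂μ with hEηdef
  have hmul : ∀ i, ∫ ω, F i ω * η i ω ∂μ = (μ (B i)).toReal * Eη := by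
    intro i
    have := (hindepi i).integral_mul_eq_mul_integral (hFmeas i).aestronglyMeasurable
      (hmeas i).aestronglyMeasurable
    have heq : (fun ω => F i ω * η i ω) = F i * η i := rfl
    rw [heq, this, hFval i, hident' i]
  -- lower bound on Eη
  have hEη : d * (n:ℝ) ^ (γ/2) ≤ Eη := by
    set T : Set Ω := {ω | M ≤ η 0 ω} with hT
    have hTmeas : MeasurableSet T := measurableSet_le measurable_const (hmeas 0)
    have htl := htail M hM1 le_rfl
    have hp : c₁ * M ^ (-(1:ℝ)/2) ≤ (μ T).toReal :=
      (ENNReal.ofReal_le_iff_le_toReal (measure_ne_top μ T)).mp htl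
    have hind : ∀ᵐ ω ∂μ, T.indicator (fun _ => M) ω ≤ η 0 ω := by
      filter_upwards [hbdd 0] with ω hω
      by_cases h : ω ∈ T
      · rw [Set.indicator_of_mem h]; exact h
      · rw [Set.indicator_of_notMem h]; linarith [hω.1]
    have h1 : (μ T).toReal * M ≤ Eη := by
      have := integral_mono_ae ((integrable_const M).indicator hTmeas) (hηint 0) hind
      rwa [integral_indicator_const M hTmeas, smul_eq_mul] at this
    have h2 : c₁ * M ^ ((1:ℝ)/2) ≤ (μ T).toReal * M := by
      have hstep : c₁ * M ^ (-(1:ℝ)/2) * M ≤ (μ T).toReal * M :=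
        mul_le_mul_of_nonneg_right hp hMpos.le
      have hre : M ^ (-(1:ℝ)/2) * M = M ^ ((1:ℝ)/2) := by
        nth_rewrite 2 [← Real.rpow_one M]
        rw [← Real.rpow_add hMpos]
        norm_num
      calc c₁ * M ^ ((1:ℝ)/2) = c₁ * (M ^ (-(1:ℝ)/2) * M) := by rw [hre]
        _ = c₁ * M ^ (-(1:ℝ)/2) * M := by ring
        _ ≤ (μ T).toReal * M := hstep
    have h3 : d * (n:ℝ) ^ (γ/2) = c₁ * M ^ ((1:ℝ)/2) := by
      rw [hd, hM, Real.mul_rpow hc₂.le (Real.rpow_nonneg hnpos.le _)]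
      have : ((n:ℝ) ^ γ) ^ ((1:ℝ)/2) = (n:ℝ) ^ (γ/2) := by
        rw [← Real.rpow_mul hnpos.le]
        congr 1
        ring
      rw [this]
      ring
    linarith
  -- assembling
  have hKae : (fun ω => ((K ω : ℕ) : ℝ)) =ᵐ[μ] fun ω => ∑ i ∈ Finset.range (n+1), F i ω := by
    filter_upwards [hG] with ω hω using (key ω hω).1
  have hKint : ∫ ω, ((K ω : ℕ) : ℝ) ∂μ = ∑ i ∈ Finset.range (n+1), (μ (B i)).toReal := by
    rw [integral_congr_ae hKae, integral_finset_sum _ (fun i _ => hFint i)]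
    exact Finset.sum_congr rfl fun i _ => hFval i
  have hsum2 : (∑ i ∈ Finset.range (n+1), (μ (B i)).toReal) * Eη ≤ 2 * (n:ℝ) := by
    rw [Finset.sum_mul]
    have e1 : ∑ i ∈ Finset.range (n+1), (μ (B i)).toReal * Eη
        = ∫ ω, ∑ i ∈ Finset.range (n+1), F i ω * η i ω ∂μ := by
      rw [integral_finset_sum _ (fun i _ => hFηint i)]
      exact (Finset.sum_congr rfl fun i _ => (hmul i).symm)
    rw [e1]
    have e2 := integral_mono_ae (integrable_finset_sum _ (fun i _ => hFηint i))
      (integrable_const (2 * (n:ℝ)))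
      (by filter_upwards [hG] with ω hω using (key ω hω).2)
    simpa using e2
  have hA0 : 0 ≤ ∫ ω, ((K ω : ℕ) : ℝ) ∂μ :=
    integral_nonneg (fun ω => Nat.cast_nonneg _)
  have hdn : 0 < d * (n:ℝ) ^ (γ/2) := by positivity
  have hAle : (∫ ω, ((K ω : ℕ) : ℝ) ∂μ) * (d * (n:ℝ) ^ (γ/2)) ≤ 2 * (n:ℝ) := by
    calc (∫ ω, ((K ω : ℕ) : ℝ) ∂μ) * (d * (n:ℝ) ^ (γ/2))
        ≤ (∫ ω, ((K ω : ℕ) : ℝ) ∂μ) * Eη := mul_le_mul_of_nonneg_left hEη hA0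
      _ = (∑ i ∈ Finset.range (n+1), (μ (B i)).toReal) * Eη := by rw [hKint]
      _ ≤ 2 * (n:ℝ) := hsum2
  have hfin : 2 / d * (n:ℝ) ^ (1 - γ/2) = 2 * (n:ℝ) / (d * (n:ℝ) ^ (γ/2)) := by
    rw [Real.rpow_sub hnpos, Real.rpow_one]
    field_simp
  rw [hfin, le_div_iff₀ hdn]
  exact hAle
end

section
/- Let T̄ = inf{n ≥ 1 : S_n < 0} be the first entrance time into the negative half-line for a one-dimensional symmetric, nondegenerate random walk (S_n) started at 0 with integer steps and finite variance. Then there is a constant c > 0 such that P(T̄ ≥ a) ≥ c/√a for all a ≥ 1. -/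
open MeasureTheory ProbabilityTheory Filter

def psum (k : ℕ) (v : Fin k → ℤ) (m : ℕ) : ℤ := ∑ l : Fin k, if (l : ℕ) < m then v l else 0

lemma psum_eq (k : ℕ) (w : ℕ → ℤ) {m : ℕ} (h : m ≤ k) :
    psum k (fun l => w l) m = ∑ i ∈ Finset.range m, w i := by
  rw [psum, Fin.sum_univ_eq_sum_range (fun i => if i < m then w i else 0) k,
    ← Finset.sum_subset (Finset.range_subset_range.2 h)
      (fun x _ hxm => by simp only [Finset.mem_range, not_lt] at hxm; simp [Nat.not_lt.2 hxm])]
  exact Finset.sum_congr rfl (fun i hi => by simp only [Finset.mem_range] at hi; simp [hi])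

def Bq (k : ℕ) : Set (Fin k → ℤ) := {v | ∀ l, 1 ≤ l → l ≤ k → 0 ≤ psum k v l}
def Bu (k : ℕ) : Set (Fin k → ℤ) := {v | ∀ l, 1 ≤ l → l ≤ k → 1 ≤ psum k v l}

lemma first_argmax (v : ℕ → ℤ) (n : ℕ) :
    ∃! k, k ≤ n ∧ (∀ j < k, v j < v k) ∧ (∀ j ≤ n, k < j → v j ≤ v k) := by
  have hex : ∀ n, ∃ k, k ≤ n ∧ (∀ j < k, v j < v k) ∧ (∀ j ≤ n, k < j → v j ≤ v k) := by
    intro n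
    induction n with
    | zero => exact ⟨0, le_refl _, fun j hj => absurd hj (Nat.not_lt_zero j), fun j hj hj' => by omega⟩
    | succ n ih =>
      obtain ⟨k, hk, h1, h2⟩ := ih
      by_cases hle : v (n+1) ≤ v k
      · refine ⟨k, by omega, h1, fun j hj hj' => ?_⟩
        rcases Nat.lt_or_ge j (n+1) with h | h
        · exact h2 j (by omega) hj'
        · have : j = n + 1 := by omega
          rw [this]; exact hle
      · push_neg at hle
        have hall : ∀ j ≤ n, v j ≤ v k := by
          intro j hj
          rcases lt_trichotomy j k with h | h | h
          · exact le_of_lt (h1 j h)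
          · rw [h]
          · exact h2 j hj h
        exact ⟨n+1, le_refl _, fun j hj => lt_of_le_of_lt (hall j (by omega)) hle,
          fun j hj hj' => by omega⟩
  obtain ⟨k, hk⟩ := hex n
  refine ⟨k, hk, fun k' hk' => ?_⟩
  by_contra hne
  rcases lt_or_gt_of_ne hne with h | h
  -- h : k' < k  in first case
  · exact absurd (hk'.2.2 k (by omega) h) (not_le.2 (hk.2.1 k' h))
  · exact absurd (hk.2.2 k' (by omega) h) (not_le.2 (hk'.2.1 k h))
lemma measSet {n : ℕ} (B : Set (Fin n → ℤ)) : MeasurableSet B := (Set.to_countable B).measurableSet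

lemma tuple_meas {Ω : Type*} {m0 : MeasurableSpace Ω} (η : ℕ → Ω → ℤ) (hm : ∀ i, Measurable (η i))
    (G : ℕ → ℕ) (m : ℕ) : Measurable (fun a (l : Fin m) => η (G l) a) :=
  measurable_pi_lambda _ (fun l => hm (G l))

lemma law_pi {Ω : Type*} {m0 : MeasurableSpace Ω} {μ : Measure Ω} [IsProbabilityMeasure μ]
    (η : ℕ → Ω → ℤ) (hm : ∀ i, Measurable (η i))
    (hi : iIndepFun η μ)
    (π : Measure ℤ) [IsProbabilityMeasure π] (hπ : ∀ i, μ.map (η i) = π)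
    (m : ℕ) (g : Fin m → ℕ) (hg : Function.Injective g) :
    μ.map (fun a (l : Fin m) => η (g l) a) = Measure.pi (fun _ => π) := by
  classical
  have hV : Measurable (fun a (l : Fin m) => η (g l) a) :=
    measurable_pi_lambda _ (fun l => hm (g l))
  refine (Measure.pi_eq fun s hs => ?_).symm
  rw [Measure.map_apply hV (MeasurableSet.univ_pi hs)]
  set sets : ℕ → Set ℤ := fun j => ⋂ (l : Fin m) (_ : g l = j), s l with hsets
  have hsets_meas : ∀ j, MeasurableSet (sets j) :=
    fun j => (Set.to_countable _).measurableSet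
  have hsets_eq : ∀ l : Fin m, sets (g l) = s l := by
    intro l
    apply Set.eq_of_subset_of_subset
    · exact Set.biInter_subset_of_mem rfl
    · intro x hx
      refine Set.mem_iInter.2 fun l' => Set.mem_iInter.2 fun hl' => ?_
      rwa [hg hl']
  have hpre : (fun a (l : Fin m) => η (g l) a) ⁻¹' Set.univ.pi s
      = ⋂ j ∈ Finset.image g Finset.univ, η j ⁻¹' sets j := by
    ext a
    simp only [Set.mem_preimage, Set.mem_pi, Set.mem_univ, forall_true_left,
      Set.mem_iInter, Finset.mem_image, Finset.mem_univ, true_and]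
    constructor
    · rintro h j ⟨l, rfl⟩
      rw [hsets_eq l]; exact h l
    · intro h l
      have := h (g l) ⟨l, rfl⟩
      rwa [hsets_eq l] at this
  rw [hpre, hi.measure_inter_preimage_eq_mul _ (fun j _ => hsets_meas j),
    Finset.prod_image (fun x _ y _ h => hg h)]
  refine Finset.prod_congr rfl fun l _ => ?_
  rw [hsets_eq l, ← hπ (g l), Measure.map_apply (hm (g l)) ((Set.to_countable _).measurableSet)]

lemma meas_tuple {Ω : Type*} {m0 : MeasurableSpace Ω} {μ : Measure Ω} [IsProbabilityMeasure μ]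
    (η : ℕ → Ω → ℤ) (hm : ∀ i, Measurable (η i))
    (hi : iIndepFun η μ)
    (π : Measure ℤ) [IsProbabilityMeasure π] (hπ : ∀ i, μ.map (η i) = π)
    (m : ℕ) (G : ℕ → ℕ) (hG : ∀ i < m, ∀ j < m, G i = G j → i = j)
    (B : Set (Fin m → ℤ)) :
    μ ((fun a (l : Fin m) => η (G l) a) ⁻¹' B) = Measure.pi (fun _ : Fin m => π) B := by
  rw [← law_pi η hm hi π hπ m (fun l : Fin m => G l)
      (fun l l' h => Fin.ext (hG _ l.isLt _ l'.isLt h)),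
    Measure.map_apply (tuple_meas η hm G m) (measSet B)]

lemma indep_blocks {Ω : Type*} {m0 : MeasurableSpace Ω} {μ : Measure Ω}
    (ξ : ℕ → Ω → ℤ) (hmeas : ∀ i, Measurable (ξ i))
    (hindep : iIndepFun ξ μ) (k n : ℕ) :
    IndepFun (fun a (l : Fin k) => ξ (k-1-(l:ℕ)) a) (fun a (l : Fin (n-k)) => -ξ (k+(l:ℕ)) a) μ := by
  classical
  have hdisj : Disjoint (Finset.range k) (Finset.Ico k n) := by
    rw [Finset.disjoint_left]
    intro x hx hx'
    simp only [Finset.mem_range] at hx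
    simp only [Finset.mem_Ico] at hx'
    omega
  have h := hindep.indepFun_finset (Finset.range k) (Finset.Ico k n) hdisj hmeas
  have hφ : Measurable (fun (v : (i : (Finset.range k : Finset ℕ)) → ℤ) (l : Fin k) =>
      v ⟨k-1-(l:ℕ), Finset.mem_range.mpr (by have := l.isLt; omega)⟩) :=
    measurable_pi_lambda _ (fun l => measurable_pi_apply _)
  have hψ : Measurable (fun (v : (i : (Finset.Ico k n : Finset ℕ)) → ℤ) (l : Fin (n-k)) =>
      -v ⟨k+(l:ℕ), Finset.mem_Ico.mpr (by have := l.isLt; omega)⟩) :=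
    measurable_pi_lambda _ (fun l => (measurable_pi_apply _).neg)
  exact h.comp hφ hψ

lemma sumrev (w : ℕ → ℤ) (k : ℕ) : ∀ m, m ≤ k →
    ∑ i ∈ Finset.range m, w (k-1-i) =
      (∑ i ∈ Finset.range k, w i) - ∑ i ∈ Finset.range (k-m), w i := by
  intro m
  induction m with
  | zero => simp
  | succ m ih =>
    intro hm
    rw [Finset.sum_range_succ, ih (by omega)]
    have h1 : k - m = (k - (m+1)) + 1 := by omega
    have h2 : k - 1 - m = k - (m+1) := by omega
    rw [h1, Finset.sum_range_succ, h2]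
    ring

lemma sumshift (w : ℕ → ℤ) (k : ℕ) : ∀ m,
    ∑ i ∈ Finset.range m, -w (k+i) =
      (∑ i ∈ Finset.range k, w i) - ∑ i ∈ Finset.range (k+m), w i := by
  intro m
  induction m with
  | zero => simp
  | succ m ih =>
    rw [Finset.sum_range_succ, ih]
    have h1 : k + (m+1) = (k + m) + 1 := by omega
    rw [h1, Finset.sum_range_succ]
    ring
lemma conv_id {Ω : Type*} {m0 : MeasurableSpace Ω} {μ : Measure Ω} [IsProbabilityMeasure μ]
    (ξ : ℕ → Ω → ℤ) (hmeas : ∀ i, Measurable (ξ i))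
    (hindep : iIndepFun ξ μ)
    (π : Measure ℤ) [IsProbabilityMeasure π] (hπ : ∀ i, μ.map (ξ i) = π)
    (hπn : ∀ i, μ.map (fun a => -ξ i a) = π) (n : ℕ) :
    ∑ k ∈ Finset.range (n+1),
      (Measure.pi (fun _ : Fin k => π) (Bu k)) * (Measure.pi (fun _ : Fin (n-k) => π) (Bq (n-k)))
      = 1 := by
  classical
  have hmeasn : ∀ i, Measurable (fun a => -ξ i a) := fun i => (hmeas i).neg
  have hindepn : iIndepFun (fun i a => -ξ i a) μ :=
    hindep.comp (fun _ => Neg.neg) (fun _ => measurable_neg)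
  set Sp : Ω → ℕ → ℤ := fun a j => ∑ i ∈ Finset.range j, ξ i a with hSp
  set F : ℕ → Set Ω := fun k => (fun a (l : Fin k) => ξ (k-1-(l:ℕ)) a) ⁻¹' Bu k with hF
  set G : ℕ → Set Ω := fun k => (fun a (l : Fin (n-k)) => -ξ (k+(l:ℕ)) a) ⁻¹' Bq (n-k) with hG
  have hFmeas : ∀ k, MeasurableSet (F k) :=
    fun k => tuple_meas ξ hmeas (fun i => k-1-i) k (measSet _)
  have hGmeas : ∀ k, MeasurableSet (G k) :=
    fun k => tuple_meas (fun i a => -ξ i a) hmeasn (fun i => k+i) (n-k) (measSet _)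
  have hFiff : ∀ k a, a ∈ F k ↔ (∀ j < k, Sp a j < Sp a k) := by
    intro k a
    constructor
    · intro h j hj
      have hm := h (k - j) (by omega) (by omega)
      rw [psum_eq k (fun i => ξ (k-1-i) a) (by omega : k - j ≤ k),
        sumrev (fun i => ξ i a) k (k-j) (by omega)] at hm
      have hkj : k - (k - j) = j := by omega
      rw [hkj] at hm
      simp only [hSp]
      omega
    · intro h m hm1 hmk
      show (1:ℤ) ≤ psum k _ m
      rw [psum_eq k (fun i => ξ (k-1-i) a) hmk, sumrev (fun i => ξ i a) k m hmk]
      have := h (k - m) (by omega)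
      simp only [hSp] at this
      omega
  have hGiff : ∀ k ≤ n, ∀ a, a ∈ G k ↔ (∀ j ≤ n, k < j → Sp a j ≤ Sp a k) := by
    intro k hk a
    constructor
    · intro h j hj hkj
      have hm := h (j - k) (by omega) (by omega)
      rw [psum_eq (n-k) (fun i => -ξ (k+i) a) (by omega : j - k ≤ n - k),
        sumshift (fun i => ξ i a) k (j-k)] at hm
      have hkj2 : k + (j - k) = j := by omega
      rw [hkj2] at hm
      simp only [hSp]
      omega
    · intro h m hm1 hmk
      show (0:ℤ) ≤ psum (n-k) _ m
      rw [psum_eq (n-k) (fun i => -ξ (k+i) a) hmk, sumshift (fun i => ξ i a) k m]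
      have := h (k + m) (by omega) (by omega)
      simp only [hSp] at this
      omega
  have hcover : (Set.univ : Set Ω) = ⋃ k ∈ Finset.range (n+1), F k ∩ G k := by
    apply Set.eq_of_subset_of_subset
    · intro a _
      obtain ⟨k, ⟨hk, h1, h2⟩, _⟩ := first_argmax (fun j => Sp a j) n
      exact Set.mem_iUnion₂.mpr ⟨k, Finset.mem_range.mpr (by omega),
        (hFiff k a).2 h1, (hGiff k hk a).2 h2⟩
    · exact Set.subset_univ _
  have hdisj : (↑(Finset.range (n+1)) : Set ℕ).PairwiseDisjoint (fun k => F k ∩ G k) := by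
    intro k hk k' hk' hne
    simp only [Finset.coe_range, Set.mem_Iio] at hk hk'
    refine Set.disjoint_left.mpr fun a ha ha' => hne ?_
    exact ExistsUnique.unique (first_argmax (fun j => Sp a j) n)
      ⟨by omega, (hFiff k a).1 ha.1, (hGiff k (by omega) a).1 ha.2⟩
      ⟨by omega, (hFiff k' a).1 ha'.1, (hGiff k' (by omega) a).1 ha'.2⟩
  have hsplit : ∀ k, μ (F k ∩ G k) = μ (F k) * μ (G k) := by
    intro k
    exact (indep_blocks ξ hmeas hindep k n).measure_inter_preimage_eq_mul
      _ _ (measSet _) (measSet _)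
  have hFval : ∀ k, μ (F k) = Measure.pi (fun _ : Fin k => π) (Bu k) := by
    intro k
    exact meas_tuple ξ hmeas hindep π hπ k (fun i => k-1-i) (fun i hi j hj h => by omega) (Bu k)
  have hGval : ∀ k, μ (G k) = Measure.pi (fun _ : Fin (n-k) => π) (Bq (n-k)) := by
    intro k
    exact meas_tuple (fun i a => -ξ i a) hmeasn hindepn π hπn (n-k)
      (fun i => k+i) (fun i hi j hj h => by omega) (Bq (n-k))
  calc ∑ k ∈ Finset.range (n+1),
      (Measure.pi (fun _ : Fin k => π) (Bu k)) * (Measure.pi (fun _ : Fin (n-k) => π) (Bq (n-k)))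
      = ∑ k ∈ Finset.range (n+1), μ (F k ∩ G k) := by
        refine Finset.sum_congr rfl fun k _ => ?_
        rw [hsplit k, hFval k, hGval k]
    _ = μ (⋃ k ∈ Finset.range (n+1), F k ∩ G k) :=
        (measure_biUnion_finset hdisj (fun k _ => (hFmeas k).inter (hGmeas k))).symm
    _ = 1 := by rw [← hcover, measure_univ]

section events
variable {Ω : Type*} {m0 : MeasurableSpace Ω} {μ : Measure Ω} [IsProbabilityMeasure μ]
    (ξ : ℕ → Ω → ℤ) (hmeas : ∀ i, Measurable (ξ i))
    (hindep : iIndepFun ξ μ)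
    (π : Measure ℤ) [IsProbabilityMeasure π] (hπ : ∀ i, μ.map (ξ i) = π)

include hmeas hindep hπ

lemma q_event (m : ℕ) :
    μ {a | ∀ l, 1 ≤ l → l ≤ m → 0 ≤ ∑ i ∈ Finset.range l, ξ i a}
      = Measure.pi (fun _ : Fin m => π) (Bq m) := by
  have hset : {a | ∀ l, 1 ≤ l → l ≤ m → 0 ≤ ∑ i ∈ Finset.range l, ξ i a}
      = (fun a (l : Fin m) => ξ ((fun i : ℕ => i) (l:ℕ)) a) ⁻¹' Bq m := by
    ext a
    simp only [Set.mem_setOf_eq, Set.mem_preimage]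
    constructor
    · intro h l h1 hl
      show (0:ℤ) ≤ psum m _ l
      rw [psum_eq m (fun i => ξ i a) hl]
      exact h l h1 hl
    · intro h l h1 hl
      have := h l h1 hl
      rwa [show psum m (fun l : Fin m => ξ ((l:ℕ)) a) l = ∑ i ∈ Finset.range l, ξ i a from
        psum_eq m (fun i => ξ i a) hl] at this
  rw [hset]
  exact meas_tuple ξ hmeas hindep π hπ m (fun i => i) (fun i _ j _ h => by simpa using h) (Bq m)

lemma u_event (m : ℕ) :
    μ {a | ∀ l, 1 ≤ l → l ≤ m → 1 ≤ ∑ i ∈ Finset.range l, ξ i a}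
      = Measure.pi (fun _ : Fin m => π) (Bu m) := by
  have hset : {a | ∀ l, 1 ≤ l → l ≤ m → 1 ≤ ∑ i ∈ Finset.range l, ξ i a}
      = (fun a (l : Fin m) => ξ ((fun i : ℕ => i) (l:ℕ)) a) ⁻¹' Bu m := by
    ext a
    simp only [Set.mem_setOf_eq, Set.mem_preimage]
    constructor
    · intro h l h1 hl
      show (1:ℤ) ≤ psum m _ l
      rw [psum_eq m (fun i => ξ i a) hl]
      exact h l h1 hl
    · intro h l h1 hl
      have := h l h1 hl
      rwa [show psum m (fun l : Fin m => ξ ((l:ℕ)) a) l = ∑ i ∈ Finset.range l, ξ i a from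
        psum_eq m (fun i => ξ i a) hl] at this
  rw [hset]
  exact meas_tuple ξ hmeas hindep π hπ m (fun i => i) (fun i _ j _ h => by simpa using h) (Bu m)

lemma q_mono (m : ℕ) : Measure.pi (fun _ : Fin (m+1) => π) (Bq (m+1))
    ≤ Measure.pi (fun _ : Fin m => π) (Bq m) := by
  rw [← q_event ξ hmeas hindep π hπ m, ← q_event ξ hmeas hindep π hπ (m+1)]
  exact measure_mono (fun a ha l h1 hl => ha l h1 (by omega))

lemma u_lower (m : ℕ) :
    π {x : ℤ | 1 ≤ x} * Measure.pi (fun _ : Fin m => π) (Bq m)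
      ≤ Measure.pi (fun _ : Fin (m+1) => π) (Bu (m+1)) := by
  classical
  set A : Set Ω := ξ 0 ⁻¹' {x : ℤ | 1 ≤ x} with hA
  set B : Set Ω := (fun a (l : Fin m) => ξ ((fun i : ℕ => i + 1) (l:ℕ)) a) ⁻¹' Bq m with hB
  have hdisj : Disjoint ({0} : Finset ℕ) (Finset.Ico 1 (m+1)) := by
    rw [Finset.disjoint_left]; intro x hx hx'
    simp only [Finset.mem_singleton] at hx
    simp only [Finset.mem_Ico] at hx'
    omega
  have h := hindep.indepFun_finset {0} (Finset.Ico 1 (m+1)) hdisj hmeas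
  have hφ : Measurable (fun (v : (i : ({0} : Finset ℕ)) → ℤ) =>
      v ⟨0, Finset.mem_singleton_self 0⟩) := measurable_pi_apply _
  have hψ : Measurable (fun (v : (i : (Finset.Ico 1 (m+1) : Finset ℕ)) → ℤ) (l : Fin m) =>
      v ⟨(l:ℕ)+1, Finset.mem_Ico.mpr (by have := l.isLt; omega)⟩) :=
    measurable_pi_lambda _ (fun l => measurable_pi_apply _)
  have hIF : IndepFun (ξ 0) (fun a (l : Fin m) => ξ ((l:ℕ)+1) a) μ := h.comp hφ hψ
  have hAB : μ (A ∩ B) = π {x : ℤ | 1 ≤ x} * Measure.pi (fun _ : Fin m => π) (Bq m) := by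
    rw [hIF.measure_inter_preimage_eq_mul _ _ ((Set.to_countable _).measurableSet) (measSet _)]
    congr 1
    · rw [← hπ 0, Measure.map_apply (hmeas 0) ((Set.to_countable _).measurableSet)]
    · exact meas_tuple ξ hmeas hindep π hπ m (fun i => i+1)
        (fun i _ j _ h => by omega) (Bq m)
  rw [← hAB, ← u_event ξ hmeas hindep π hπ (m+1)]
  refine measure_mono fun a ⟨ha, hb⟩ => ?_
  intro l h1 hl
  obtain ⟨l', rfl⟩ : ∃ l', l = l' + 1 := ⟨l - 1, by omega⟩
  rw [Finset.sum_range_succ']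
  have h1' : (1:ℤ) ≤ ξ 0 a := ha
  have h0 : (0:ℤ) ≤ ∑ i ∈ Finset.range l', ξ (i+1) a := by
    rcases Nat.eq_zero_or_pos l' with h | h
    · simp [h]
    · have := hb l' (by omega) (by omega)
      rwa [show psum m (fun l : Fin m => ξ ((l:ℕ)+1) a) l' = ∑ i ∈ Finset.range l', ξ (i+1) a
        from psum_eq m (fun i => ξ (i+1) a) (by omega)] at this
  omega

lemma u_le_q (m : ℕ) : Measure.pi (fun _ : Fin m => π) (Bu m)
    ≤ Measure.pi (fun _ : Fin m => π) (Bq m) :=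
  measure_mono (fun v hv l h1 hl => le_trans (by omega) (hv l h1 hl))

end events

lemma real_lower (qr ur : ℕ → ℝ) (ρ : ℝ) (hρ : 0 < ρ)
    (hq0 : ∀ m, 0 ≤ qr m)
    (hmono : ∀ m n, m ≤ n → qr n ≤ qr m)
    (hid : ∀ n, ∑ k ∈ Finset.range (n+1), ur k * qr (n-k) = 1)
    (huq : ∀ k, ur k ≤ qr k)
    (hlow : ∀ k, ρ * qr k ≤ ur k) :
    ∀ h : ℕ, Real.sqrt ρ / (4 * Real.sqrt 2) / Real.sqrt (h+1) ≤ qr h := by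
  intro h
  set QQ : ℕ → ℝ := fun m => ∑ k ∈ Finset.range (m+1), qr k with hQQ
  have hQ0 : ∀ m, 0 ≤ QQ m := fun m => Finset.sum_nonneg (fun k _ => hq0 k)
  -- Step 1 : ρ * QQ h ^ 2 ≤ 2h+1
  have step1 : ρ * QQ h ^ 2 ≤ 2 * h + 1 := by
    have hbox : QQ h ^ 2 = ∑ p ∈ Finset.range (h+1) ×ˢ Finset.range (h+1), qr p.1 * qr p.2 := by
      rw [sq, hQQ, Finset.sum_mul_sum, Finset.sum_product]
    have htri : QQ h ^ 2 ≤ ∑ n ∈ Finset.range (2*h+1), ∑ k ∈ Finset.range (n+1), qr k * qr (n-k) := by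
      rw [hbox]
      rw [show ∑ n ∈ Finset.range (2*h+1), ∑ k ∈ Finset.range (n+1), qr k * qr (n-k)
          = ∑ p ∈ (Finset.range (2*h+1)).sigma (fun n => Finset.range (n+1)),
              qr p.2 * qr (p.1 - p.2) from
        Finset.sum_sigma' (Finset.range (2*h+1)) (fun n => Finset.range (n+1))
          (fun n k => qr k * qr (n-k))]
      have himg : ∑ p ∈ Finset.range (h+1) ×ˢ Finset.range (h+1), qr p.1 * qr p.2
          = ∑ p ∈ (Finset.range (h+1) ×ˢ Finset.range (h+1)).image
              (fun p : ℕ × ℕ => (⟨p.1 + p.2, p.1⟩ : Σ _ : ℕ, ℕ)),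
              qr p.2 * qr (p.1 - p.2) := by
        rw [Finset.sum_image]
        · refine Finset.sum_congr rfl fun p _ => ?_
          simp
        · intro p _ q _ hpq
          simp only [Sigma.mk.inj_iff, heq_eq_eq] at hpq
          have : p.1 = q.1 := hpq.2
          have : p.2 = q.2 := by omega
          exact Prod.ext hpq.2 this
      rw [himg]
      apply Finset.sum_le_sum_of_subset_of_nonneg
      · intro p hp
        simp only [Finset.mem_image, Finset.mem_product, Finset.mem_range] at hp
        obtain ⟨q, ⟨hq1, hq2⟩, rfl⟩ := hp
        simp only [Finset.mem_sigma, Finset.mem_range]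
        omega
      · intro p _ _
        exact mul_nonneg (hq0 _) (hq0 _)
    have hub : ∀ n, ρ * ∑ k ∈ Finset.range (n+1), qr k * qr (n-k) ≤ 1 := by
      intro n
      rw [Finset.mul_sum, ← hid n]
      refine Finset.sum_le_sum fun k _ => ?_
      rw [← mul_assoc]
      exact mul_le_mul_of_nonneg_right (hlow k) (hq0 _)
    calc ρ * QQ h ^ 2 ≤ ρ * ∑ n ∈ Finset.range (2*h+1), ∑ k ∈ Finset.range (n+1), qr k * qr (n-k) :=
          mul_le_mul_of_nonneg_left htri hρ.le
      _ = ∑ n ∈ Finset.range (2*h+1), ρ * ∑ k ∈ Finset.range (n+1), qr k * qr (n-k) := by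
          rw [Finset.mul_sum]
      _ ≤ ∑ n ∈ Finset.range (2*h+1), 1 := Finset.sum_le_sum fun n _ => hub n
      _ = 2 * h + 1 := by simp
  -- Step 2 : 1 ≤ 4 * qr h * QQ h
  have step2 : 1 ≤ 4 * qr h * QQ h := by
    have hterm : ∀ k ∈ Finset.range (2*h+1), ur k * qr (2*h-k) ≤ qr h * (qr k + qr (2*h-k)) := by
      intro k hk
      simp only [Finset.mem_range] at hk
      have h1 : ur k * qr (2*h-k) ≤ qr k * qr (2*h-k) :=
        mul_le_mul_of_nonneg_right (huq k) (hq0 _)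
      rcases le_or_gt k h with hkh | hkh
      · have : qr (2*h-k) ≤ qr h := hmono h (2*h-k) (by omega)
        nlinarith [hq0 k, hq0 (2*h-k), hq0 h]
      · have : qr k ≤ qr h := hmono h k (by omega)
        nlinarith [hq0 k, hq0 (2*h-k), hq0 h]
    have hrefl : ∑ k ∈ Finset.range (2*h+1), qr (2*h-k) = QQ (2*h) := by
      have := Finset.sum_range_reflect qr (2*h+1)
      simpa using this
    have hQ2 : QQ (2*h) ≤ 2 * QQ h := by
      have hsplit : QQ (2*h) = QQ h + ∑ k ∈ Finset.Ico (h+1) (2*h+1), qr k := by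
        simp only [hQQ]
        rw [Finset.range_eq_Ico,
          ← Finset.sum_Ico_consecutive _ (Nat.zero_le (h+1)) (by omega : h+1 ≤ 2*h+1), ← Finset.range_eq_Ico]
      have htail : ∑ k ∈ Finset.Ico (h+1) (2*h+1), qr k ≤ QQ h := by
        rw [Finset.sum_Ico_eq_sum_range]
        have : 2*h+1 - (h+1) = h := by omega
        rw [this]
        calc ∑ i ∈ Finset.range h, qr (h+1+i) ≤ ∑ i ∈ Finset.range h, qr i :=
              Finset.sum_le_sum fun i _ => hmono i (h+1+i) (by omega)
          _ ≤ QQ h := Finset.sum_le_sum_of_subset_of_nonneg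
              (Finset.range_subset_range.2 (by omega)) (fun i _ _ => hq0 i)
      linarith
    calc (1:ℝ) = ∑ k ∈ Finset.range (2*h+1), ur k * qr (2*h-k) := (hid (2*h)).symm
      _ ≤ ∑ k ∈ Finset.range (2*h+1), qr h * (qr k + qr (2*h-k)) := Finset.sum_le_sum hterm
      _ = qr h * (QQ (2*h) + QQ (2*h)) := by
          rw [← Finset.mul_sum, Finset.sum_add_distrib, hrefl]
      _ ≤ qr h * (2 * QQ h + 2 * QQ h) := by
          have := hq0 h
          nlinarith [hQ2]
      _ = 4 * qr h * QQ h := by ring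
  -- combine
  have hQpos : 0 < QQ h := by nlinarith [hq0 h, hQ0 h]
  have hkey : QQ h * Real.sqrt ρ ≤ Real.sqrt 2 * Real.sqrt (h+1) := by
    have h2 : (QQ h * Real.sqrt ρ)^2 ≤ (Real.sqrt 2 * Real.sqrt (h+1))^2 := by
      rw [mul_pow, mul_pow, Real.sq_sqrt hρ.le, Real.sq_sqrt (by norm_num : (0:ℝ) ≤ 2),
        Real.sq_sqrt (by positivity : (0:ℝ) ≤ (h:ℝ)+1)]
      nlinarith [step1]
    have ha : 0 ≤ QQ h * Real.sqrt ρ := mul_nonneg hQpos.le (Real.sqrt_nonneg _)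
    have hb : 0 ≤ Real.sqrt 2 * Real.sqrt (h+1) := mul_nonneg (Real.sqrt_nonneg _) (Real.sqrt_nonneg _)
    nlinarith [h2, ha, hb]
  have hd : (0:ℝ) < Real.sqrt 2 * Real.sqrt (h+1) := by positivity
  rw [div_div, div_le_iff₀ (by positivity)]
  have hsρ : (0:ℝ) ≤ Real.sqrt ρ := Real.sqrt_nonneg _
  -- goal : √ρ ≤ qr h * (4 * √2 * √(h+1))
  have hc1 : Real.sqrt ρ ≤ Real.sqrt ρ * (4 * qr h * QQ h) := by nlinarith [step2]
  have hc2 : Real.sqrt ρ * (4 * qr h * QQ h) ≤ 4 * qr h * (Real.sqrt 2 * Real.sqrt (h+1)) := by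
    have h4q : 0 ≤ 4 * qr h := by nlinarith [hq0 h]
    nlinarith [mul_le_mul_of_nonneg_left hkey h4q]
  calc Real.sqrt ρ ≤ Real.sqrt ρ * (4 * qr h * QQ h) := hc1
    _ ≤ 4 * qr h * (Real.sqrt 2 * Real.sqrt (h+1)) := hc2
    _ = qr h * (4 * Real.sqrt 2 * Real.sqrt (h+1)) := by ring

/-- For a symmetric, nondegenerate, finite-variance integer random walk
started at 0, the first entrance time `T̄` into the negative half-line satisfies
`P(T̄ ≥ a) ≥ c/√a` for some constant `c > 0` and all `a ≥ 1`. -/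
theorem first_descent_time_lower_bound
    {Ω : Type*} {m0 : MeasurableSpace Ω} {μ : Measure Ω} [IsProbabilityMeasure μ]
    (ξ : ℕ → Ω → ℤ) (hmeas : ∀ i, Measurable (ξ i))
    (hindep : iIndepFun ξ μ)
    (hident : ∀ i, μ.map (ξ i) = μ.map (ξ 0))
    (hsym : μ.map (ξ 0) = μ.map (fun ω => -ξ 0 ω))
    (hnondeg : 0 < μ {ω | ξ 0 ω ≠ 0})
    (hvar : Integrable (fun ω => ((ξ 0 ω : ℝ)) ^ 2) μ) :
    ∃ c : ℝ, 0 < c ∧ ∀ a : ℕ, 1 ≤ a →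
      ENNReal.ofReal (c / Real.sqrt a) ≤
        μ {ω | ∀ n : ℕ, 1 ≤ n → n < a → 0 ≤ ∑ i ∈ Finset.range n, ξ i ω} := by
  classical
  set π : Measure ℤ := μ.map (ξ 0) with hπdef
  haveI : IsProbabilityMeasure π := Measure.isProbabilityMeasure_map (hmeas 0).aemeasurable
  have hπ : ∀ i, μ.map (ξ i) = π := hident
  have hmapneg : ∀ i, μ.map (fun a => -ξ i a) = π.map Neg.neg := by
    intro i
    have : (fun a => -ξ i a) = Neg.neg ∘ ξ i := rfl
    rw [this, ← Measure.map_map measurable_neg (hmeas i), hπ i]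
  have hπneg : π.map Neg.neg = π := by
    rw [← hmapneg 0, hπdef, ← hsym]
  have hπn : ∀ i, μ.map (fun a => -ξ i a) = π := fun i => by rw [hmapneg i, hπneg]
  -- positivity of ρE
  set ρE : ENNReal := π {x : ℤ | 1 ≤ x} with hρEdef
  have hpre : Neg.neg ⁻¹' {x : ℤ | 1 ≤ x} = {x : ℤ | x ≤ -1} := by
    ext x
    simp only [Set.mem_preimage, Set.mem_setOf_eq]
    omega
  have hflip : π {x : ℤ | x ≤ -1} = ρE := by
    rw [hρEdef]
    conv_rhs => rw [← hπneg]
    rw [Measure.map_apply measurable_neg ((Set.to_countable _).measurableSet), hpre]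
  have hρE : 0 < ρE := by
    rcases eq_or_ne ρE 0 with h0 | h0
    · exfalso
      have hsub : {ω | ξ 0 ω ≠ 0} = ξ 0 ⁻¹' {x : ℤ | x ≠ 0} := rfl
      have hmap : μ {ω | ξ 0 ω ≠ 0} = π {x : ℤ | x ≠ 0} := by
        rw [hsub, hπdef, Measure.map_apply (hmeas 0) ((Set.to_countable _).measurableSet)]
      have hcover : {x : ℤ | x ≠ 0} ⊆ {x : ℤ | 1 ≤ x} ∪ {x : ℤ | x ≤ -1} := by
        intro x hx
        simp only [Set.mem_setOf_eq, Set.mem_union] at hx ⊢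
        omega
      have : π {x : ℤ | x ≠ 0} ≤ ρE + ρE := by
        calc π {x : ℤ | x ≠ 0} ≤ π ({x : ℤ | 1 ≤ x} ∪ {x : ℤ | x ≤ -1}) := measure_mono hcover
          _ ≤ π {x : ℤ | 1 ≤ x} + π {x : ℤ | x ≤ -1} := measure_union_le _ _
          _ = ρE + ρE := by rw [hflip]
      rw [hmap] at hnondeg
      rw [h0, add_zero] at this
      exact absurd (lt_of_lt_of_le hnondeg this) (lt_irrefl 0)
    · exact pos_iff_ne_zero.mpr h0
  -- ENNReal-level quantities
  set qE : ℕ → ENNReal := fun m => Measure.pi (fun _ : Fin m => π) (Bq m) with hqEdef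
  set uE : ℕ → ENNReal := fun m => Measure.pi (fun _ : Fin m => π) (Bu m) with huEdef
  have hqE_ne : ∀ m, qE m ≠ ⊤ := fun m => measure_ne_top _ _
  have huE_ne : ∀ m, uE m ≠ ⊤ := fun m => measure_ne_top _ _
  have hqE_le_one : ∀ m, qE m ≤ 1 := fun m => prob_le_one
  have huE0 : uE 0 = 1 := by
    have : Bu 0 = Set.univ := by
      ext v; simp only [Bu, Set.mem_setOf_eq, Set.mem_univ, iff_true]
      intro l h1 h0; omega
    show Measure.pi (fun _ : Fin 0 => π) (Bu 0) = 1
    rw [this]; exact measure_univ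
  have hρE_ne : ρE ≠ ⊤ := by
    refine ne_top_of_le_ne_top (by simp : (1:ENNReal) ≠ ⊤) prob_le_one
  -- real quantities
  set qr : ℕ → ℝ := fun m => (qE m).toReal with hqrdef
  set ur : ℕ → ℝ := fun m => (uE m).toReal with hurdef
  set ρ : ℝ := ρE.toReal with hρdef
  have hρr : 0 < ρ := ENNReal.toReal_pos hρE.ne' hρE_ne
  have hq0 : ∀ m, 0 ≤ qr m := fun m => ENNReal.toReal_nonneg
  have hmonoE : ∀ m n, m ≤ n → qE n ≤ qE m := by
    intro m n hmn
    induction n with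
    | zero => have : m = 0 := by omega
              rw [this]
    | succ n ih =>
      rcases Nat.lt_or_ge m (n+1) with h | h
      · exact le_trans (q_mono ξ hmeas hindep π hπ n) (ih (by omega))
      · have : m = n + 1 := by omega
        rw [this]
  have hmono : ∀ m n, m ≤ n → qr n ≤ qr m := fun m n hmn =>
    ENNReal.toReal_mono (hqE_ne m) (hmonoE m n hmn)
  have hid : ∀ n, ∑ k ∈ Finset.range (n+1), ur k * qr (n-k) = 1 := by
    intro n
    have hENN := conv_id ξ hmeas hindep π hπ hπn n
    have := congrArg ENNReal.toReal hENN
    rw [ENNReal.toReal_sum (fun k _ => ENNReal.mul_ne_top (huE_ne k) (hqE_ne (n-k)))] at this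
    simpa only [ENNReal.toReal_mul, ENNReal.toReal_one] using this
  have huq : ∀ k, ur k ≤ qr k := fun k =>
    ENNReal.toReal_mono (hqE_ne k) (u_le_q (μ := μ) ξ hmeas hindep π hπ k)
  have hlow : ∀ k, ρ * qr k ≤ ur k := by
    intro k
    cases k with
    | zero =>
      rw [hurdef]; simp only [huE0, ENNReal.toReal_one]
      have h1 : qr 0 ≤ 1 := by
        rw [hqrdef]
        exact ENNReal.toReal_le_of_le_ofReal (by norm_num) (by simpa using hqE_le_one 0)
      have h2 : ρ ≤ 1 := by
        rw [hρdef]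
        exact ENNReal.toReal_le_of_le_ofReal (by norm_num) (by simpa using (prob_le_one : ρE ≤ 1))
      nlinarith [hq0 0]
    | succ m =>
      have hE : ρE * qE m ≤ uE (m+1) := u_lower ξ hmeas hindep π hπ m
      have h1 : ρ * qr m ≤ ur (m+1) := by
        have := ENNReal.toReal_mono (huE_ne (m+1)) hE
        rwa [ENNReal.toReal_mul] at this
      have h2 : qr (m+1) ≤ qr m := hmono m (m+1) (by omega)
      nlinarith [hρr.le]
  -- final constant
  refine ⟨Real.sqrt ρ / (4 * Real.sqrt 2), by positivity, ?_⟩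
  intro a ha
  have hkey := real_lower qr ur ρ hρr hq0 hmono hid huq hlow (a-1)
  have hcast : ((a-1 : ℕ) : ℝ) + 1 = (a : ℝ) := by
    have : ((a-1 : ℕ) : ℝ) = (a : ℝ) - 1 := by
      push_cast [Nat.cast_sub ha]; ring
    rw [this]; ring
  rw [hcast] at hkey
  have hevent : {ω | ∀ n : ℕ, 1 ≤ n → n < a → 0 ≤ ∑ i ∈ Finset.range n, ξ i ω}
      = {ω | ∀ l, 1 ≤ l → l ≤ a-1 → 0 ≤ ∑ i ∈ Finset.range l, ξ i ω} := by
    ext ω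
    simp only [Set.mem_setOf_eq]
    constructor
    · intro h l h1 hl; exact h l h1 (by omega)
    · intro h n h1 hn; exact h n h1 (by omega)
  rw [hevent, q_event ξ hmeas hindep π hπ (a-1)]
  calc ENNReal.ofReal (Real.sqrt ρ / (4 * Real.sqrt 2) / Real.sqrt a)
      ≤ ENNReal.ofReal (qr (a-1)) := ENNReal.ofReal_le_ofReal hkey
    _ = qE (a-1) := ENNReal.ofReal_toReal (hqE_ne (a-1))
end
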